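/- Let Φ = {e_i − e_j : i, j ∈ Fin 4, i ≠ j} ⊆ ℝ^4 be the root system of type A_3, whose Weyl group is the group of coordinate-permuting linear maps of ℝ^4 (isomorphic to S_4). Up to conjugacy by the Weyl group, Φ has exactly 32 nonempty closed subsets; among these, exactly 15 are special (empty symmetric part), exactly 4 are symmetric (empty special part), and exactly 13 have both nonempty symmetric part and nonempty special part. -/

import Mathlib

/-- The root system of type `A_3` in `ℝ^4`: the vectors `e_i - e_j` for `i ≠ j`. -/
def typeA3 : Set (Fin 4 → ℝ) :=
  {v | ∃ i j : Fin 4, i ≠ j ∧ v = Pi.single i (1 : ℝ) - Pi.single j (1 : ℝ)}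

/-- `T` is a closed subset of the root system of type `A_3`. -/
def IsClosedSubA3 (T : Set (Fin 4 → ℝ)) : Prop :=
  T ⊆ typeA3 ∧ ∀ α ∈ T, ∀ β ∈ T, α + β ∈ typeA3 → α + β ∈ T

/-- The symmetric part `T^r = {α ∈ T | -α ∈ T}`. -/
def symmPart (T : Set (Fin 4 → ℝ)) : Set (Fin 4 → ℝ) := {α ∈ T | -α ∈ T}

/-- The special part `T^u = {α ∈ T | -α ∉ T}`. -/
def specPart (T : Set (Fin 4 → ℝ)) : Set (Fin 4 → ℝ) := {α ∈ T | -α ∉ T}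

/-- The coordinate-permuting linear map of `ℝ^4` induced by a permutation `π` of `Fin 4`,
sending `e_i` to `e_{π i}`. The Weyl group of `A_3` consists exactly of these maps. -/
def permMap (π : Equiv.Perm (Fin 4)) : (Fin 4 → ℝ) → (Fin 4 → ℝ) :=
  fun v j => v (π.symm j)

/-- Conjugacy of subsets of the root system `A_3` under its Weyl group
(the coordinate-permuting maps of `ℝ^4`). -/
def ConjA3 (S T : Set (Fin 4 → ℝ)) : Prop :=
  ∃ π : Equiv.Perm (Fin 4), permMap π '' S = T

namespace A3Aux

abbrev Pr := Fin 4 × Fin 4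

/-- Decode an index `0..11` into an off-diagonal pair. -/
def decode : ℕ → Pr
  | 0 => (0,1) | 1 => (0,2) | 2 => (0,3)
  | 3 => (1,0) | 4 => (1,2) | 5 => (1,3)
  | 6 => (2,0) | 7 => (2,1) | 8 => (2,3)
  | 9 => (3,0) | 10 => (3,1) | _ => (3,2)

/-- Encode an off-diagonal pair as an index `0..11`. -/
def encode (p : Pr) : ℕ :=
  3 * p.1.val + (if p.2.val < p.1.val then p.2.val else p.2.val - 1)

lemma d1 : ∀ p : Pr, p.1 ≠ p.2 → decode (encode p) = p := by decide
lemma d2 : ∀ p : Pr, p.1 ≠ p.2 → encode p < 12 := by decide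
lemma d3 : ∀ k : Fin 12, (decode k.val).1 ≠ (decode k.val).2 := by decide
lemma d4 : ∀ k : Fin 12, encode (decode k.val) = k.val := by decide

/-- Integer model of the root `e_i - e_j`. -/
def z (p : Pr) : Fin 4 → ℤ :=
  fun x => (if x = p.1 then 1 else 0) - (if x = p.2 then 1 else 0)

/-- The root `e_i - e_j` as a real vector. -/
def rt (p : Pr) : Fin 4 → ℝ := fun x => ((z p x : ℤ) : ℝ)

lemma z_inj : ∀ p q : Pr, p.1 ≠ p.2 → q.1 ≠ q.2 → z p = z q → p = q := by decide

lemma z_sum_iff : ∀ p q : Pr, p.1 ≠ p.2 → q.1 ≠ q.2 →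
    ((∃ r : Pr, r.1 ≠ r.2 ∧ z p + z q = z r) ↔
      ((p.2 = q.1 ∧ p.1 ≠ q.2) ∨ (q.2 = p.1 ∧ q.1 ≠ p.2))) := by decide

lemma z_sum_eq : ∀ p q : Pr, p.2 = q.1 → p.1 ≠ q.2 → z p + z q = z (p.1, q.2) := by decide

lemma z_neg : ∀ p : Pr, -z p = z (p.2, p.1) := by decide

lemma cast_inj {f g : Fin 4 → ℤ} (h : (fun x => ((f x : ℤ) : ℝ)) = fun x => ((g x : ℤ) : ℝ)) :
    f = g :=
  funext fun x => Int.cast_injective (congrFun h x)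

lemma rt_eq_iff {p q : Pr} : rt p = rt q ↔ z p = z q :=
  ⟨fun h => cast_inj h, fun h => by unfold rt; rw [h]⟩

lemma rt_add (p q : Pr) : rt p + rt q = fun x => ((z p x + z q x : ℤ) : ℝ) := by
  funext x; simp [rt]

lemma rt_add_eq_iff {p q r : Pr} : rt p + rt q = rt r ↔ z p + z q = z r := by
  rw [rt_add]
  constructor
  · intro h; exact cast_inj (f := fun x => z p x + z q x) h
  · intro h; funext x; rw [show z p x + z q x = (z p + z q) x from rfl, h]; rfl

lemma rt_neg (p : Pr) : -rt p = rt (p.2, p.1) := by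
  funext x
  have : (-rt p) x = ((-z p x : ℤ) : ℝ) := by simp [rt]
  rw [this, show -z p x = (-z p) x from rfl, z_neg p]; rfl

lemma single_sub (i j : Fin 4) : Pi.single i (1 : ℝ) - Pi.single j 1 = rt (i, j) := by
  funext x
  simp only [Pi.sub_apply, Pi.single_apply, rt, z]
  split_ifs <;> norm_num

lemma mem_typeA3 {v : Fin 4 → ℝ} : v ∈ typeA3 ↔ ∃ p : Pr, p.1 ≠ p.2 ∧ v = rt p := by
  constructor
  · rintro ⟨i, j, hij, rfl⟩; exact ⟨(i, j), hij, (single_sub i j)⟩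
  · rintro ⟨p, hp, rfl⟩; exact ⟨p.1, p.2, hp, (single_sub p.1 p.2).symm⟩

lemma rt_mem {p : Pr} (h : p.1 ≠ p.2) : rt p ∈ typeA3 := mem_typeA3.2 ⟨p, h, rfl⟩

lemma rt_inj {p q : Pr} (hp : p.1 ≠ p.2) (hq : q.1 ≠ q.2) (h : rt p = rt q) : p = q :=
  z_inj p q hp hq (rt_eq_iff.1 h)

lemma rt_sum_mem_iff {p q : Pr} (hp : p.1 ≠ p.2) (hq : q.1 ≠ q.2) :
    rt p + rt q ∈ typeA3 ↔ ((p.2 = q.1 ∧ p.1 ≠ q.2) ∨ (q.2 = p.1 ∧ q.1 ≠ p.2)) := by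
  rw [mem_typeA3, ← z_sum_iff p q hp hq]
  constructor
  · rintro ⟨r, hr, h⟩; exact ⟨r, hr, rt_add_eq_iff.1 h⟩
  · rintro ⟨r, hr, h⟩; exact ⟨r, hr, rt_add_eq_iff.2 h⟩

lemma rt_sum_eq {p q : Pr} (h1 : p.2 = q.1) (h2 : p.1 ≠ q.2) :
    rt p + rt q = rt (p.1, q.2) :=
  rt_add_eq_iff.2 (z_sum_eq p q h1 h2)

lemma perm_rt (π : Equiv.Perm (Fin 4)) (p : Pr) :
    permMap π (rt p) = rt (π p.1, π p.2) := by
  funext x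
  simp only [permMap, rt, z, Equiv.symm_apply_eq]

lemma boolEq {a b : Bool} (h : a = true ↔ b = true) : a = b := by
  cases a <;> cases b <;> simp_all

/-! ### Boolean layer on bitmasks -/

def memB (m k : ℕ) : Bool := ((m.shiftRight k).land 1).beq 1

lemma memB_eq (m k : ℕ) : memB m k = m.testBit k := by
  rw [Nat.testBit_eq_decide_div_mod_eq]
  unfold memB
  rw [show m.shiftRight k = m >>> k from rfl, show (m >>> k).land 1 = (m >>> k) &&& 1 from rfl,
    Nat.and_one_is_mod, Nat.shiftRight_eq_div_pow]
  apply boolEq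
  rw [Nat.beq_eq, decide_eq_true_eq]

/-- Composition triples: indices `a b c` with `decode a = (i,j)`, `decode b = (j,k)`,
`decode c = (i,k)`, `i ≠ k`. -/
def triplesN : List (ℕ × ℕ × ℕ) :=
  [(0,4,1), (0,5,2), (1,7,0), (1,8,2), (2,10,0), (2,11,1),
   (3,1,4), (3,2,5), (4,6,3), (4,8,5), (5,9,3), (5,11,4),
   (6,0,7), (6,2,8), (7,3,6), (7,5,8), (8,9,6), (8,10,7),
   (9,0,10), (9,1,11), (10,3,9), (10,4,11), (11,6,9), (11,7,10)]

def closedB (m : ℕ) : Bool :=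
  triplesN.all fun t => !(memB m t.1) || !(memB m t.2.1) || memB m t.2.2

lemma tri1 : ∀ a b : Fin 12, (decode a.val).2 = (decode b.val).1 →
    (decode a.val).1 ≠ (decode b.val).2 →
    (a.val, b.val, encode ((decode a.val).1, (decode b.val).2)) ∈ triplesN := by decide

lemma tri2 : ∀ t ∈ triplesN, ∃ a b : Fin 12, t.1 = a.val ∧ t.2.1 = b.val ∧
    (decode a.val).2 = (decode b.val).1 ∧ (decode a.val).1 ≠ (decode b.val).2 ∧
    t.2.2 = encode ((decode a.val).1, (decode b.val).2) := by decide

lemma closedB_iff (m : ℕ) : closedB m = true ↔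
    ∀ a b : Fin 12, m.testBit a.val = true → m.testBit b.val = true →
      (decode a.val).2 = (decode b.val).1 → (decode a.val).1 ≠ (decode b.val).2 →
      m.testBit (encode ((decode a.val).1, (decode b.val).2)) = true := by
  unfold closedB
  rw [List.all_eq_true]
  constructor
  · intro h a b ha hb h1 h2
    have ht := h _ (tri1 a b h1 h2)
    simp only [memB_eq, Bool.or_eq_true, Bool.not_eq_true'] at ht
    rcases ht with ((h' | h') | h')
    · rw [ha] at h'; cases h'
    · rw [hb] at h'; cases h'
    · exact h'
  · intro h t ht
    obtain ⟨a, b, e1, e2, h1, h2, e3⟩ := tri2 t ht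
    simp only [memB_eq, Bool.or_eq_true, Bool.not_eq_true', e1, e2, e3]
    rcases ha : m.testBit a.val with _ | _
    · tauto
    rcases hb : m.testBit b.val with _ | _
    · tauto
    exact Or.inr (h a b ha hb h1 h2)

def mkP (f g : Fin 4 → Fin 4) (h1 : ∀ x, g (f x) = x := by decide)
    (h2 : ∀ x, f (g x) = x := by decide) : Equiv.Perm (Fin 4) := ⟨f, g, h1, h2⟩

/-- All 24 permutations of `Fin 4`, each paired with the table
`k ↦ encode (π⁻¹ applied to decode k)`. -/
def pairsPT : List (Equiv.Perm (Fin 4) × List ℕ) := [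
(mkP ![0,1,2,3] ![0,1,2,3], [0,1,2,3,4,5,6,7,8,9,10,11]),
(mkP ![0,1,3,2] ![0,1,3,2], [0,2,1,3,5,4,9,10,11,6,7,8]),
(mkP ![0,2,1,3] ![0,2,1,3], [1,0,2,6,7,8,3,4,5,9,11,10]),
(mkP ![0,2,3,1] ![0,3,1,2], [2,0,1,9,10,11,3,5,4,6,8,7]),
(mkP ![0,3,1,2] ![0,2,3,1], [1,2,0,6,8,7,9,11,10,3,4,5]),
(mkP ![0,3,2,1] ![0,3,2,1], [2,1,0,9,11,10,6,8,7,3,5,4]),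
(mkP ![1,0,2,3] ![1,0,2,3], [3,4,5,0,1,2,7,6,8,10,9,11]),
(mkP ![1,0,3,2] ![1,0,3,2], [3,5,4,0,2,1,10,9,11,7,6,8]),
(mkP ![1,2,0,3] ![2,0,1,3], [6,7,8,1,0,2,4,3,5,11,9,10]),
(mkP ![1,2,3,0] ![3,0,1,2], [9,10,11,2,0,1,5,3,4,8,6,7]),
(mkP ![1,3,0,2] ![2,0,3,1], [6,8,7,1,2,0,11,9,10,4,3,5]),
(mkP ![1,3,2,0] ![3,0,2,1], [9,11,10,2,1,0,8,6,7,5,3,4]),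
(mkP ![2,0,1,3] ![1,2,0,3], [4,3,5,7,6,8,0,1,2,10,11,9]),
(mkP ![2,0,3,1] ![1,3,0,2], [5,3,4,10,9,11,0,2,1,7,8,6]),
(mkP ![2,1,0,3] ![2,1,0,3], [7,6,8,4,3,5,1,0,2,11,10,9]),
(mkP ![2,1,3,0] ![3,1,0,2], [10,9,11,5,3,4,2,0,1,8,7,6]),
(mkP ![2,3,0,1] ![2,3,0,1], [8,6,7,11,9,10,1,2,0,4,5,3]),
(mkP ![2,3,1,0] ![3,2,0,1], [11,9,10,8,6,7,2,1,0,5,4,3]),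
(mkP ![3,0,1,2] ![1,2,3,0], [4,5,3,7,8,6,10,11,9,0,1,2]),
(mkP ![3,0,2,1] ![1,3,2,0], [5,4,3,10,11,9,7,8,6,0,2,1]),
(mkP ![3,1,0,2] ![2,1,3,0], [7,8,6,4,5,3,11,10,9,1,0,2]),
(mkP ![3,1,2,0] ![3,1,2,0], [10,11,9,5,4,3,8,7,6,2,0,1]),
(mkP ![3,2,0,1] ![2,3,1,0], [8,7,6,11,10,9,4,5,3,1,2,0]),
(mkP ![3,2,1,0] ![3,2,1,0], [11,10,9,8,7,6,5,4,3,2,1,0])]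

def conjTB (t : List ℕ) (m r : ℕ) : Bool :=
  (List.range 12).all fun k => (memB r k) == (memB m (t.getD k 0))

lemma conjTB_iff (t : List ℕ) (m r : ℕ) : conjTB t m r = true ↔
    ∀ k : Fin 12, r.testBit k.val = m.testBit (t.getD k.val 0) := by
  unfold conjTB
  rw [List.all_eq_true]
  constructor
  · intro h k
    have := h k.val (List.mem_range.2 k.isLt)
    rwa [memB_eq, memB_eq, beq_iff_eq] at this
  · intro h x hx
    rw [memB_eq, memB_eq, beq_iff_eq]
    exact h ⟨x, List.mem_range.1 hx⟩

lemma ptOK : ∀ pr ∈ pairsPT, ∀ k : Fin 12, pr.2.getD k.val 0 =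
    encode (pr.1.symm (decode k.val).1, pr.1.symm (decode k.val).2) := by decide

lemma ptPerm : ∀ pr ∈ pairsPT,
    ((List.range 12).map (fun k => pr.2.getD k 0)).Perm (List.range 12) := by decide

lemma permCover : ∀ π : Equiv.Perm (Fin 4), ∃ pr ∈ pairsPT, pr.1 = π := by decide

def cntS (m : ℕ) : ℕ := ((List.range 12).map (fun k => (m.shiftRight k).land 1)).sum

lemma cnt_of_conjT (pr : Equiv.Perm (Fin 4) × List ℕ) (hpr : pr ∈ pairsPT) {m r : ℕ}
    (h : conjTB pr.2 m r = true) : cntS r = cntS m := by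
  have hiff := (conjTB_iff pr.2 m r).1 h
  have hval : ∀ k : Fin 12,
      (r.shiftRight k.val).land 1 = (m.shiftRight (pr.2.getD k.val 0)).land 1 := by
    intro k
    have hb := hiff k
    rw [Nat.testBit_eq_decide_div_mod_eq, Nat.testBit_eq_decide_div_mod_eq] at hb
    rw [show ∀ x i : ℕ, (x.shiftRight i).land 1 = x / 2 ^ i % 2 from fun x i => by
      rw [show (x.shiftRight i).land 1 = (x >>> i) &&& 1 from rfl, Nat.and_one_is_mod,
        Nat.shiftRight_eq_div_pow],
      show ∀ x i : ℕ, (x.shiftRight i).land 1 = x / 2 ^ i % 2 from fun x i => by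
      rw [show (x.shiftRight i).land 1 = (x >>> i) &&& 1 from rfl, Nat.and_one_is_mod,
        Nat.shiftRight_eq_div_pow]]
    have h1 : r / 2 ^ k.val % 2 < 2 := Nat.mod_lt _ (by norm_num)
    have h2 : m / 2 ^ (pr.2.getD k.val 0) % 2 < 2 := Nat.mod_lt _ (by norm_num)
    have hb' : (r / 2 ^ k.val % 2 = 1) ↔ (m / 2 ^ (pr.2.getD k.val 0) % 2 = 1) :=
      decide_eq_decide.mp hb
    by_cases hc : r / 2 ^ k.val % 2 = 1
    · rw [hc, hb'.1 hc]
    · have hc2 : ¬ m / 2 ^ (pr.2.getD k.val 0) % 2 = 1 := fun h => hc (hb'.2 h)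
      omega
  calc cntS r = ((List.range 12).map (fun k => (m.shiftRight (pr.2.getD k 0)).land 1)).sum := by
        unfold cntS
        congr 1
        apply List.map_congr_left
        intro k hk
        exact hval ⟨k, List.mem_range.1 hk⟩
    _ = (((List.range 12).map (fun k => pr.2.getD k 0)).map
          (fun j => (m.shiftRight j).land 1)).sum := by rw [List.map_map]; rfl
    _ = ((List.range 12).map (fun j => (m.shiftRight j).land 1)).sum :=
          ((ptPerm pr hpr).map _).sum_eq
    _ = cntS m := rfl

/-- Swap table: `swN k = encode (swap (decode k))`. -/
def swN : ℕ → ℕ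
  | 0 => 3 | 1 => 6 | 2 => 9 | 3 => 0 | 4 => 7 | 5 => 10
  | 6 => 1 | 7 => 4 | 8 => 11 | 9 => 2 | 10 => 5 | _ => 8

lemma swN_eq : ∀ k : Fin 12, swN k.val = encode ((decode k.val).2, (decode k.val).1) := by
  decide

def symmEB (m : ℕ) : Bool := (List.range 12).all fun k => !(memB m k) || !(memB m (swN k))

def specEB (m : ℕ) : Bool := (List.range 12).all fun k => !(memB m k) || (memB m (swN k))

lemma symmEB_iff' (m : ℕ) : symmEB m = true ↔
    ∀ k : Fin 12, m.testBit k.val = true → ¬ m.testBit (swN k.val) = true := by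
  unfold symmEB
  rw [List.all_eq_true]
  constructor
  · intro h k hk
    have := h k.val (List.mem_range.2 k.isLt)
    simp only [memB_eq, Bool.or_eq_true, Bool.not_eq_true'] at this
    rcases this with h' | h'
    · rw [hk] at h'; cases h'
    · rw [h']; simp
  · intro h x hx
    simp only [memB_eq, Bool.or_eq_true, Bool.not_eq_true']
    rcases hk : m.testBit x with _ | _
    · tauto
    · exact Or.inr (by simpa using h ⟨x, List.mem_range.1 hx⟩ hk)

lemma specEB_iff' (m : ℕ) : specEB m = true ↔
    ∀ k : Fin 12, m.testBit k.val = true → m.testBit (swN k.val) = true := by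
  unfold specEB
  rw [List.all_eq_true]
  constructor
  · intro h k hk
    have := h k.val (List.mem_range.2 k.isLt)
    simp only [memB_eq, Bool.or_eq_true, Bool.not_eq_true'] at this
    rcases this with h' | h'
    · rw [hk] at h'; cases h'
    · exact h'
  · intro h x hx
    simp only [memB_eq, Bool.or_eq_true, Bool.not_eq_true']
    rcases hk : m.testBit x with _ | _
    · tauto
    · exact Or.inr (h ⟨x, List.mem_range.1 hx⟩ hk)

/-! ### The set associated to a bitmask -/

def toSet (m : ℕ) : Set (Fin 4 → ℝ) :=
  {v | ∃ k : Fin 12, m.testBit k.val = true ∧ v = rt (decode k.val)}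

lemma toSet_sub (m : ℕ) : toSet m ⊆ typeA3 := by
  rintro v ⟨k, _, rfl⟩; exact rt_mem (d3 k)

lemma mem_toSet' {m : ℕ} {p : Pr} (hp : p.1 ≠ p.2) :
    rt p ∈ toSet m ↔ m.testBit (encode p) = true := by
  constructor
  · rintro ⟨k, hk, he⟩
    have : p = decode k.val := rt_inj hp (d3 k) he
    rw [this, d4]; exact hk
  · intro h
    exact ⟨⟨encode p, d2 p hp⟩, h, by rw [d1 p hp]⟩

lemma closed_iff (m : ℕ) : closedB m = true ↔
    (∀ α ∈ toSet m, ∀ β ∈ toSet m, α + β ∈ typeA3 → α + β ∈ toSet m) := by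
  rw [closedB_iff]
  constructor
  · rintro h α ⟨a, ha, rfl⟩ β ⟨b, hb, rfl⟩ hsum
    rcases (rt_sum_mem_iff (d3 a) (d3 b)).1 hsum with ⟨h1, h2⟩ | ⟨h1, h2⟩
    · rw [rt_sum_eq h1 h2]
      exact (mem_toSet' h2).2 (h a b ha hb h1 h2)
    · rw [add_comm, rt_sum_eq h1 h2]
      exact (mem_toSet' h2).2 (h b a hb ha h1 h2)
  · intro h a b ha hb h1 h2
    have hmem : rt (decode a.val) + rt (decode b.val) ∈ toSet m :=
      h _ ⟨a, ha, rfl⟩ _ ⟨b, hb, rfl⟩ ((rt_sum_mem_iff (d3 a) (d3 b)).2 (Or.inl ⟨h1, h2⟩))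
    rw [rt_sum_eq h1 h2] at hmem
    exact (mem_toSet' h2).1 hmem

lemma conj_iff (π : Equiv.Perm (Fin 4)) (m r : ℕ) :
    (∀ k : Fin 12, r.testBit k.val =
      m.testBit (encode (π.symm (decode k.val).1, π.symm (decode k.val).2))) ↔
      permMap π '' toSet m = toSet r := by
  constructor
  · intro h
    ext v
    constructor
    · rintro ⟨w, ⟨a, ha, rfl⟩, rfl⟩
      rw [perm_rt]
      set q : Pr := (π (decode a.val).1, π (decode a.val).2) with hq
      have hqo : q.1 ≠ q.2 := fun he => d3 a (π.injective he)
      rw [mem_toSet' hqo]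
      have hk := h ⟨encode q, d2 q hqo⟩
      simp only at hk
      rw [d1 q hqo] at hk
      simp only [hq, Equiv.symm_apply_apply, Prod.mk.eta, d4] at hk
      rw [hk]; exact ha
    · rintro ⟨k, hk, rfl⟩
      set q : Pr := (π.symm (decode k.val).1, π.symm (decode k.val).2) with hq
      have hqo : q.1 ≠ q.2 := fun he => d3 k (π.symm.injective he)
      have hm : m.testBit (encode q) = true := by
        have := h k; rw [← this]; exact hk
      refine ⟨rt q, (mem_toSet' hqo).2 hm, ?_⟩
      rw [perm_rt]
      simp only [hq, Equiv.apply_symm_apply, Prod.mk.eta]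
  · intro h k
    apply boolEq
    set q : Pr := (π.symm (decode k.val).1, π.symm (decode k.val).2) with hq
    have hqo : q.1 ≠ q.2 := fun he => d3 k (π.symm.injective he)
    have himg : rt (decode k.val) = permMap π (rt q) := by
      rw [perm_rt]; simp only [hq, Equiv.apply_symm_apply, Prod.mk.eta]
    constructor
    · intro hk
      have : rt (decode k.val) ∈ toSet r := (mem_toSet' (d3 k)).2 (by rw [d4]; exact hk)
      rw [← h] at this
      obtain ⟨w, hw, hwe⟩ := this
      obtain ⟨a, ha, rfl⟩ := hw
      rw [perm_rt] at hwe
      have hao : (π (decode a.val).1, π (decode a.val).2).1 ≠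
          (π (decode a.val).1, π (decode a.val).2).2 := fun he => d3 a (π.injective he)
      have := rt_inj (d3 k) hao hwe.symm
      have hqa : q = decode a.val := by
        rw [hq, this]
        simp only [Equiv.symm_apply_apply, Prod.mk.eta]
      rw [hqa, d4]; exact ha
    · intro hm
      have hv : rt (decode k.val) ∈ permMap π '' toSet m :=
        ⟨rt q, (mem_toSet' hqo).2 hm, himg.symm⟩
      rw [h] at hv
      have := (mem_toSet' (d3 k)).1 hv
      rw [d4] at this; exact this

lemma symmEB_iff (m : ℕ) : symmEB m = true ↔ symmPart (toSet m) = ∅ := by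
  rw [symmEB_iff']
  constructor
  · intro h
    ext v
    simp only [Set.mem_empty_iff_false, iff_false]
    rintro ⟨⟨k, hk, rfl⟩, hneg⟩
    rw [rt_neg] at hneg
    have hso : ((decode k.val).2, (decode k.val).1).1 ≠ ((decode k.val).2, (decode k.val).1).2 :=
      (d3 k).symm
    have := (mem_toSet' hso).1 hneg
    rw [← swN_eq k] at this
    exact h k hk this
  · intro h k hk hsw
    have hso : ((decode k.val).2, (decode k.val).1).1 ≠ ((decode k.val).2, (decode k.val).1).2 :=
      (d3 k).symm
    have hneg : -rt (decode k.val) ∈ toSet m := by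
      rw [rt_neg]
      exact (mem_toSet' hso).2 (by rw [← swN_eq k]; exact hsw)
    have : rt (decode k.val) ∈ symmPart (toSet m) := ⟨⟨k, hk, rfl⟩, hneg⟩
    rw [h] at this
    exact this

lemma specEB_iff (m : ℕ) : specEB m = true ↔ specPart (toSet m) = ∅ := by
  rw [specEB_iff']
  constructor
  · intro h
    ext v
    simp only [Set.mem_empty_iff_false, iff_false]
    rintro ⟨⟨k, hk, rfl⟩, hneg⟩
    apply hneg
    have hso : ((decode k.val).2, (decode k.val).1).1 ≠ ((decode k.val).2, (decode k.val).1).2 :=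
      (d3 k).symm
    rw [rt_neg]
    exact (mem_toSet' hso).2 (by rw [← swN_eq k]; exact h k hk)
  · intro h k hk
    by_contra hsw
    have hso : ((decode k.val).2, (decode k.val).1).1 ≠ ((decode k.val).2, (decode k.val).1).2 :=
      (d3 k).symm
    have hneg : -rt (decode k.val) ∉ toSet m := by
      rw [rt_neg]
      intro hmm
      exact hsw (by rw [swN_eq k]; exact (mem_toSet' hso).1 hmm)
    have : rt (decode k.val) ∈ specPart (toSet m) := ⟨⟨k, hk, rfl⟩, hneg⟩
    rw [h] at this
    exact this

lemma exists_bit {m : ℕ} (h4 : m < 4096) (h0 : m ≠ 0) :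
    ∃ k : Fin 12, m.testBit k.val = true := by
  by_contra h
  push_neg at h
  apply h0
  apply Nat.eq_of_testBit_eq
  intro i
  rw [Nat.zero_testBit]
  rcases lt_or_ge i 12 with hi | hi
  · simpa using h ⟨i, hi⟩
  · exact Nat.testBit_lt_two_pow
      (lt_of_lt_of_le h4 (Nat.pow_le_pow_right (by norm_num : 0 < 2) hi))

lemma toSet_nonempty {m : ℕ} (h4 : m < 4096) (h0 : m ≠ 0) : (toSet m).Nonempty := by
  obtain ⟨k, hk⟩ := exists_bit h4 h0
  exact ⟨rt (decode k.val), k, hk, rfl⟩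

lemma toSet_inj {m m' : ℕ} (h4 : m < 4096) (h4' : m' < 4096) (h : toSet m = toSet m') :
    m = m' := by
  apply Nat.eq_of_testBit_eq
  intro i
  rcases lt_or_ge i 12 with hi | hi
  · apply boolEq
    have e : encode (decode (⟨i, hi⟩ : Fin 12).val) = i := d4 ⟨i, hi⟩
    rw [← e, ← mem_toSet' (d3 ⟨i, hi⟩), ← mem_toSet' (d3 ⟨i, hi⟩), h]
  · rw [Nat.testBit_lt_two_pow (lt_of_lt_of_le h4 (Nat.pow_le_pow_right (by norm_num : 0 < 2) hi)),
      Nat.testBit_lt_two_pow (lt_of_lt_of_le h4' (Nat.pow_le_pow_right (by norm_num : 0 < 2) hi))]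

/-! ### Representatives and the big decides -/

def repsB : List ℕ := [1, 3, 7, 9, 129, 19, 257, 1027, 23, 27, 3075, 55, 63, 147, 265, 151,
  219, 1153, 2067, 2071, 2075, 3091, 311, 319, 439, 511, 2313, 3219, 2359, 2367, 3511, 4095]

lemma repsClosed : ∀ r ∈ repsB, closedB r = true := by decide
lemma repsLt : ∀ r ∈ repsB, r < 4096 := by decide
lemma repsNe : ∀ r ∈ repsB, r ≠ 0 := by decide
lemma repsNodup : repsB.Nodup := by decide
lemma repsLen : repsB.length = 32 := by decide

lemma countSymm : (repsB.filter symmEB).length = 15 := by decide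
lemma countSpec : (repsB.filter specEB).length = 4 := by decide
lemma countMixed : (repsB.filter (fun r => !symmEB r && !specEB r)).length = 13 := by decide

set_option maxRecDepth 10000 in
set_option maxHeartbeats 8000000 in
lemma lemBBool : ∀ r ∈ repsB, ∀ r' ∈ repsB, cntS r = cntS r' →
    ∀ pr ∈ pairsPT, conjTB pr.2 r r' = true → r = r' := by decide

def searchB (m : ℕ) : Bool :=
  repsB.any fun r => ((cntS m).beq (cntS r)) && (pairsPT.any fun pr => conjTB pr.2 m r)

set_option maxRecDepth 100000 in
set_option maxHeartbeats 64000000 in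
lemma lemABool : ((List.range 64).all fun a => (List.range 64).all fun b =>
    !(closedB (64*a+b)) || ((64*a+b).beq 0) || searchB (64*a+b)) = true := by decide

/-- Bundled semantic form of `conjTB`. -/
lemma conjT_iff_sem (pr : Equiv.Perm (Fin 4) × List ℕ) (hpr : pr ∈ pairsPT) (m r : ℕ) :
    conjTB pr.2 m r = true ↔ permMap pr.1 '' toSet m = toSet r := by
  rw [conjTB_iff, ← conj_iff pr.1 m r]
  exact forall_congr' fun k => by rw [ptOK pr hpr k]

lemma lemB (π : Equiv.Perm (Fin 4)) {r r' : ℕ} (hr : r ∈ repsB) (hr' : r' ∈ repsB)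
    (h : permMap π '' toSet r = toSet r') : r = r' := by
  obtain ⟨pr, hpr, hpe⟩ := permCover π
  subst hpe
  have hc := (conjT_iff_sem pr hpr r r').2 h
  exact lemBBool r hr r' hr' (cnt_of_conjT pr hpr hc).symm pr hpr hc

lemma lemA {m : ℕ} (hm : m < 4096) (h0 : m ≠ 0) (hc : closedB m = true) :
    ∃ r ∈ repsB, ∃ pr ∈ pairsPT, conjTB pr.2 m r = true := by
  have h1 := lemABool
  rw [List.all_eq_true] at h1
  have h2 := h1 (m/64) (List.mem_range.2 (by omega))
  rw [List.all_eq_true] at h2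
  have h3 := h2 (m%64) (List.mem_range.2 (by omega))
  rw [show 64*(m/64)+m%64 = m by omega] at h3
  simp only [Bool.or_eq_true, Bool.not_eq_true'] at h3
  rcases h3 with (h | h) | h
  · rw [hc] at h; cases h
  · exact absurd (Nat.eq_of_beq_eq_true h) h0
  · unfold searchB at h
    rw [List.any_eq_true] at h
    obtain ⟨r, hr, hgate⟩ := h
    rw [Bool.and_eq_true] at hgate
    rw [List.any_eq_true] at hgate
    obtain ⟨-, pr, hpr, hcj⟩ := hgate
    exact ⟨r, hr, pr, hpr, hcj⟩

/-! ### Completeness -/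

lemma testBit_iff {n k : ℕ} : n.testBit k = true ↔ k ∈ n.bitIndices := by
  induction n using Nat.binaryRec generalizing k with
  | zero => simp [Nat.zero_testBit]
  | bit b n ih =>
    cases b with
    | false =>
      rw [Nat.bitIndices_bit_false, show Nat.bit false n = 2 * n from rfl]
      cases k with
      | zero =>
        rw [Nat.testBit_zero]
        simp [show ¬(2 * n % 2 = 1) by omega]
      | succ k =>
        rw [Nat.testBit_succ, show 2 * n / 2 = n by omega]
        rw [ih]; simp
    | true =>
      rw [Nat.bitIndices_bit_true, show Nat.bit true n = 2 * n + 1 from rfl]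
      cases k with
      | zero =>
        rw [Nat.testBit_zero]
        simp [show (2 * n + 1) % 2 = 1 by omega]
      | succ k =>
        rw [Nat.testBit_succ, show (2 * n + 1) / 2 = n by omega]
        rw [ih]; simp

lemma complete (T : Set (Fin 4 → ℝ)) (hne : T.Nonempty) (hcl : IsClosedSubA3 T) :
    ∃ m : ℕ, m < 4096 ∧ m ≠ 0 ∧ closedB m = true ∧ toSet m = T := by
  classical
  set S : Finset ℕ :=
    ((Finset.univ : Finset Pr).filter (fun p => p.1 ≠ p.2 ∧ rt p ∈ T)).image encode with hS
  set m := ∑ i ∈ S, 2^i with hm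
  have hbit : ∀ k, (m.testBit k = true ↔ k ∈ S) := by
    intro k
    rw [testBit_iff, hm]
    rw [← Finset.toFinset_bitIndices_twoPowSum S, List.mem_toFinset,
      Finset.toFinset_bitIndices_twoPowSum S, ← List.mem_toFinset,
      Finset.toFinset_bitIndices_twoPowSum S]
  have hmemS : ∀ k, k ∈ S ↔ ∃ p : Pr, (p.1 ≠ p.2 ∧ rt p ∈ T) ∧ encode p = k := by
    intro k
    simp [hS, Finset.mem_image, Finset.mem_filter]
  have hTS : toSet m = T := by
    ext v
    constructor
    · rintro ⟨k, hk, rfl⟩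
      obtain ⟨p, ⟨hp, hpT⟩, he⟩ := (hmemS k.val).1 ((hbit k.val).1 hk)
      rw [← he, d1 p hp]
      exact hpT
    · intro hv
      obtain ⟨p, hp, rfl⟩ := mem_typeA3.1 (hcl.1 hv)
      refine ⟨⟨encode p, d2 p hp⟩, ?_, by rw [d1 p hp]⟩
      exact (hbit (encode p)).2 ((hmemS (encode p)).2 ⟨p, ⟨hp, hv⟩, rfl⟩)
  have hsub : S ⊆ Finset.range 12 := by
    intro k hk
    obtain ⟨p, ⟨hp, _⟩, he⟩ := (hmemS k).1 hk
    exact Finset.mem_range.2 (he ▸ d2 p hp)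
  have hlt : m < 4096 := by
    have h1 : m ≤ ∑ i ∈ Finset.range 12, 2^i :=
      Finset.sum_le_sum_of_subset hsub
    have h2 : (∑ i ∈ Finset.range 12, 2^i : ℕ) = 4095 := by
      simp [Finset.sum_range_succ]
    omega
  have hne0 : m ≠ 0 := by
    obtain ⟨v, hv⟩ := hne
    obtain ⟨p, hp, rfl⟩ := mem_typeA3.1 (hcl.1 hv)
    have : m.testBit (encode p) = true :=
      (hbit (encode p)).2 ((hmemS (encode p)).2 ⟨p, ⟨hp, hv⟩, rfl⟩)
    intro h0
    rw [h0, Nat.zero_testBit] at this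
    cases this
  exact ⟨m, hlt, hne0, (closed_iff m).2 (by rw [hTS]; exact hcl.2), hTS⟩

end A3Aux

open A3Aux in
/-- Up to conjugacy by the Weyl group, the root system of type `A_3` has
exactly 32 nonempty closed subsets: 15 special, 4 symmetric, and 13 with both parts
nonempty. -/
theorem a3_closed_subset_classification :
    ∃ R : Finset (Set (Fin 4 → ℝ)),
      (∀ T ∈ R, T.Nonempty ∧ IsClosedSubA3 T) ∧
      (∀ T ∈ R, ∀ T' ∈ R, ConjA3 T T' → T = T') ∧
      (∀ T : Set (Fin 4 → ℝ), T.Nonempty → IsClosedSubA3 T → ∃ T' ∈ R, ConjA3 T T') ∧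
      R.card = 32 ∧
      {T ∈ (R : Set (Set (Fin 4 → ℝ))) | symmPart T = ∅}.ncard = 15 ∧
      {T ∈ (R : Set (Set (Fin 4 → ℝ))) | specPart T = ∅}.ncard = 4 ∧
      {T ∈ (R : Set (Set (Fin 4 → ℝ))) |
        (symmPart T).Nonempty ∧ (specPart T).Nonempty}.ncard = 13 := by
  classical
  refine ⟨(repsB.map toSet).toFinset, ?_, ?_, ?_, ?_, ?_, ?_, ?_⟩
  · intro T hT
    obtain ⟨r, hr, rfl⟩ := List.mem_map.1 (List.mem_toFinset.1 hT)
    exact ⟨toSet_nonempty (repsLt r hr) (repsNe r hr),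
      toSet_sub r, (closed_iff r).1 (repsClosed r hr)⟩
  · intro T hT T' hT' hconj
    obtain ⟨r, hr, rfl⟩ := List.mem_map.1 (List.mem_toFinset.1 hT)
    obtain ⟨r', hr', rfl⟩ := List.mem_map.1 (List.mem_toFinset.1 hT')
    obtain ⟨π, hπ⟩ := hconj
    rw [lemB π hr hr' hπ]
  · intro T hTne hTcl
    obtain ⟨m, hlt, hne0, hcb, hTS⟩ := complete T hTne hTcl
    obtain ⟨r, hr, pr, hpr, hcj⟩ := lemA hlt hne0 hcb
    refine ⟨toSet r, List.mem_toFinset.2 (List.mem_map.2 ⟨r, hr, rfl⟩), pr.1, ?_⟩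
    rw [← hTS]
    exact (conjT_iff_sem pr hpr m r).1 hcj
  · have hnd : (repsB.map toSet).Nodup := by
      refine List.Nodup.map_on ?_ repsNodup
      intro x hx y hy hxy
      exact toSet_inj (repsLt x hx) (repsLt y hy) hxy
    rw [List.toFinset_card_of_nodup hnd, List.length_map, repsLen]
  · rw [show {T ∈ ((repsB.map toSet).toFinset : Set (Set (Fin 4 → ℝ))) | symmPart T = ∅} =
        (((repsB.filter symmEB).map toSet).toFinset : Set (Set (Fin 4 → ℝ))) from ?_]
    · rw [Set.ncard_coe_finset]
      have hnd : ((repsB.filter symmEB).map toSet).Nodup := by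
        refine List.Nodup.map_on ?_ (repsNodup.filter _)
        intro x hx y hy hxy
        exact toSet_inj (repsLt x (List.mem_of_mem_filter hx))
          (repsLt y (List.mem_of_mem_filter hy)) hxy
      rw [List.toFinset_card_of_nodup hnd, List.length_map, countSymm]
    · ext T
      simp only [Set.mem_setOf_eq, Finset.mem_coe, List.mem_toFinset, List.mem_map,
        List.mem_filter]
      constructor
      · rintro ⟨⟨r, hr, rfl⟩, hP⟩
        exact ⟨r, ⟨hr, (symmEB_iff r).2 hP⟩, rfl⟩
      · rintro ⟨r, ⟨hr, hs⟩, rfl⟩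
        exact ⟨⟨r, hr, rfl⟩, (symmEB_iff r).1 hs⟩
  · rw [show {T ∈ ((repsB.map toSet).toFinset : Set (Set (Fin 4 → ℝ))) | specPart T = ∅} =
        (((repsB.filter specEB).map toSet).toFinset : Set (Set (Fin 4 → ℝ))) from ?_]
    · rw [Set.ncard_coe_finset]
      have hnd : ((repsB.filter specEB).map toSet).Nodup := by
        refine List.Nodup.map_on ?_ (repsNodup.filter _)
        intro x hx y hy hxy
        exact toSet_inj (repsLt x (List.mem_of_mem_filter hx))
          (repsLt y (List.mem_of_mem_filter hy)) hxy
      rw [List.toFinset_card_of_nodup hnd, List.length_map, countSpec]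
    · ext T
      simp only [Set.mem_setOf_eq, Finset.mem_coe, List.mem_toFinset, List.mem_map,
        List.mem_filter]
      constructor
      · rintro ⟨⟨r, hr, rfl⟩, hP⟩
        exact ⟨r, ⟨hr, (specEB_iff r).2 hP⟩, rfl⟩
      · rintro ⟨r, ⟨hr, hs⟩, rfl⟩
        exact ⟨⟨r, hr, rfl⟩, (specEB_iff r).1 hs⟩
  · rw [show {T ∈ ((repsB.map toSet).toFinset : Set (Set (Fin 4 → ℝ))) |
          (symmPart T).Nonempty ∧ (specPart T).Nonempty} =
        (((repsB.filter (fun r => !symmEB r && !specEB r)).map toSet).toFinset :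
          Set (Set (Fin 4 → ℝ))) from ?_]
    · rw [Set.ncard_coe_finset]
      have hnd : ((repsB.filter (fun r => !symmEB r && !specEB r)).map toSet).Nodup := by
        refine List.Nodup.map_on ?_ (repsNodup.filter _)
        intro x hx y hy hxy
        exact toSet_inj (repsLt x (List.mem_of_mem_filter hx))
          (repsLt y (List.mem_of_mem_filter hy)) hxy
      rw [List.toFinset_card_of_nodup hnd, List.length_map, countMixed]
    · ext T
      simp only [Set.mem_setOf_eq, Finset.mem_coe, List.mem_toFinset, List.mem_map,
        List.mem_filter, Bool.and_eq_true, Bool.not_eq_true']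
      constructor
      · rintro ⟨⟨r, hr, rfl⟩, h1, h2⟩
        refine ⟨r, ⟨hr, ?_, ?_⟩, rfl⟩
        · rcases hs : symmEB r with _ | _
          · rfl
          · exact absurd ((symmEB_iff r).1 hs) (Set.nonempty_iff_ne_empty.1 h1)
        · rcases hs : specEB r with _ | _
          · rfl
          · exact absurd ((specEB_iff r).1 hs) (Set.nonempty_iff_ne_empty.1 h2)
      · rintro ⟨r, ⟨hr, h1, h2⟩, rfl⟩
        refine ⟨⟨r, hr, rfl⟩, ?_, ?_⟩
        · rw [Set.nonempty_iff_ne_empty]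
          intro he
          rw [← symmEB_iff r] at he
          rw [he] at h1; cases h1
        · rw [Set.nonempty_iff_ne_empty]
          intro he
          rw [← specEB_iff r] at he
          rw [he] at h2; cases h2
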